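/- For 0 < q < 1, 0 < z < 1, and n ≥ 1, we have (1 - q^{n+1})/(1 - q^{n+2}) · (I_n(q;z))^2 < I_{n-1}(q;z) · I_{n+1}(q;z), where I_n(q;z) = Σ_{k=n+1}^∞ z^k/(q;q)_k. -/

import Mathlib

open Finset Filter Topology

noncomputable def qPoch (q : ℝ) (m : ℕ) : ℝ := ∏ j ∈ Finset.range m, (1 - q ^ (j + 1))

/-- Tail of the q-exponential e(q;z) starting at index m; I_n(q;z) = qexpTail q z (n+1). -/
noncomputable def qexpTail (q z : ℝ) (m : ℕ) : ℝ := ∑' k : ℕ, z ^ (m + k) / qPoch q (m + k)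

lemma qPoch_pos {q : ℝ} (hq0 : 0 ≤ q) (hq1 : q < 1) (m : ℕ) : 0 < qPoch q m := by
  apply Finset.prod_pos
  intro j _
  have : q ^ (j + 1) < 1 := pow_lt_one₀ hq0 hq1 (Nat.succ_ne_zero j)
  linarith

lemma qPoch_succ (q : ℝ) (m : ℕ) : qPoch q (m + 1) = qPoch q m * (1 - q ^ (m + 1)) := by
  simp [qPoch, Finset.prod_range_succ]

lemma summable_term {q z : ℝ} (hq0 : 0 < q) (hq1 : q < 1) (hz0 : 0 < z) (hz1 : z < 1) (m : ℕ) :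
    Summable (fun k : ℕ => z ^ (m + k) / qPoch q (m + k)) := by
  apply summable_of_ratio_norm_eventually_le (r := (1 + z) / 2) (by linarith)
  have h0 : Tendsto (fun k : ℕ => q ^ (m + k + 1)) atTop (𝓝 0) := by
    have := (tendsto_pow_atTop_nhds_zero_of_lt_one hq0.le hq1).const_mul (q ^ (m + 1))
    rw [mul_zero] at this
    refine this.congr (fun k => ?_)
    rw [← pow_add]; congr 1; ring
  have hev : ∀ᶠ k : ℕ in atTop, q ^ (m + k + 1) < (1 - z) / (1 + z) := by
    refine h0.eventually (gt_mem_nhds (div_pos (by linarith) (by linarith)))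
  filter_upwards [hev] with k hk
  have hP := qPoch_pos hq0.le hq1 (m + k)
  have hq' : q ^ (m + k + 1) < 1 := pow_lt_one₀ hq0.le hq1 (Nat.succ_ne_zero _)
  have hQ : 0 < 1 - q ^ (m + k + 1) := by linarith
  have hx : (0:ℝ) < z ^ (m + k) := pow_pos hz0 _
  have hk' : q ^ (m + k + 1) * (1 + z) < 1 - z := (lt_div_iff₀ (by linarith)).mp hk
  have h2 : 2 * z ≤ (1 + z) * (1 - q ^ (m + k + 1)) := by nlinarith
  rw [show m + (k + 1) = (m + k) + 1 from by ring, qPoch_succ, pow_succ]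
  rw [Real.norm_eq_abs, Real.norm_eq_abs, abs_of_pos (by positivity),
    abs_of_pos (by positivity), div_mul_div_comm, div_le_div_iff₀ (by positivity) (by positivity)]
  nlinarith [mul_le_mul_of_nonneg_left h2 (show (0:ℝ) ≤ z ^ (m + k) * qPoch q (m + k) by positivity)]

theorem turan_left_I (q z : ℝ) (n : ℕ) (hq0 : 0 < q) (hq1 : q < 1)
    (hz0 : 0 < z) (hz1 : z < 1) (hn : 1 ≤ n) :
    (1 - q ^ (n + 1)) / (1 - q ^ (n + 2)) * (qexpTail q z (n + 1)) ^ 2 <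
      qexpTail q z n * qexpTail q z (n + 2) := by
  have hqm : ∀ m : ℕ, 0 < 1 - q ^ (m + 1) := fun m => by
    have : q ^ (m + 1) < 1 := pow_lt_one₀ hq0.le hq1 (Nat.succ_ne_zero m)
    linarith
  have hq1' : 0 < 1 - q ^ (n + 1) := hqm n
  have hq2' : 0 < 1 - q ^ (n + 2) := hqm (n + 1)
  set u : ℕ → ℝ := fun k => z ^ (n + k) / qPoch q (n + k) with hu
  set t : ℕ → ℝ := fun k => z ^ (n + 1 + k) / qPoch q (n + 1 + k) with ht
  set v : ℕ → ℝ := fun k => z ^ (n + 2 + k) / qPoch q (n + 2 + k) with hv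
  set c0 : ℝ := (1 - q ^ (n + 2)) / (1 - q ^ (n + 1)) with hc0
  have hc0pos : 0 < c0 := div_pos hq2' hq1'
  have hupos : ∀ k, 0 < u k := fun k => div_pos (pow_pos hz0 _) (qPoch_pos hq0.le hq1 _)
  have htpos : ∀ k, 0 < t k := fun k => div_pos (pow_pos hz0 _) (qPoch_pos hq0.le hq1 _)
  have hvpos : ∀ k, 0 < v k := fun k => div_pos (pow_pos hz0 _) (qPoch_pos hq0.le hq1 _)
  -- recursion relations
  have htu : ∀ k, t k = u k * (z / (1 - q ^ (n + 1 + k))) := by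
    intro k
    simp only [ht, hu]
    rw [show n + 1 + k = (n + k) + 1 from by ring, qPoch_succ, pow_succ, div_mul_div_comm]
  have hvt : ∀ k, v k = t k * (z / (1 - q ^ (n + 2 + k))) := by
    intro k
    simp only [ht, hv]
    rw [show n + 2 + k = (n + 1 + k) + 1 from by ring, qPoch_succ, pow_succ, div_mul_div_comm]
  -- core polynomial inequality
  have core : ∀ k, (1 - q ^ (n + 1)) * (1 - q ^ (n + 2 + k)) ≤
      (1 - q ^ (n + 2)) * (1 - q ^ (n + 1 + k)) := by
    intro k
    have h1 : q ^ (n + 1 + k) ≤ q ^ (n + 1) := pow_le_pow_of_le_one hq0.le hq1.le (by omega)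
    have e1 : q ^ (n + 2 + k) = q * q ^ (n + 1 + k) := by ring
    have e2 : q ^ (n + 2) = q * q ^ (n + 1) := by ring
    nlinarith [hq0.le]
  have corestrict : (1 - q ^ (n + 1)) * (1 - q ^ (n + 2 + 1)) <
      (1 - q ^ (n + 2)) * (1 - q ^ (n + 1 + 1)) := by
    have h1 : q ^ (n + 1 + 1) < q ^ (n + 1) := pow_lt_pow_right_of_lt_one₀ hq0 hq1 (by omega)
    have e1 : q ^ (n + 2 + 1) = q * q ^ (n + 1 + 1) := by ring
    have e2 : q ^ (n + 2) = q * q ^ (n + 1) := by ring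
    nlinarith [hq0]
  -- the ratio inequality
  have hratio : ∀ k, z / (1 - q ^ (n + 1 + k)) ≤ c0 * (z / (1 - q ^ (n + 2 + k))) := by
    intro k
    have p1 : 0 < 1 - q ^ (n + 1 + k) := by
      have := hqm (n + k); rwa [show n + k + 1 = n + 1 + k from by ring] at this
    have p2 : 0 < 1 - q ^ (n + 2 + k) := by
      have := hqm (n + 1 + k); rwa [show n + 1 + k + 1 = n + 2 + k from by ring] at this
    rw [hc0, div_mul_div_comm, div_le_div_iff₀ p1 (by positivity)]
    nlinarith [core k, mul_le_mul_of_nonneg_left (core k) hz0.le]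
  have hratiostrict : z / (1 - q ^ (n + 1 + 1)) < c0 * (z / (1 - q ^ (n + 2 + 1))) := by
    have p1 : 0 < 1 - q ^ (n + 1 + 1) := hqm (n + 1)
    have p2 : 0 < 1 - q ^ (n + 2 + 1) := hqm (n + 2)
    rw [hc0, div_mul_div_comm, div_lt_div_iff₀ p1 (by positivity)]
    nlinarith [corestrict, mul_lt_mul_of_pos_left corestrict hz0]
  -- squared pointwise bound
  have h2 : ∀ k, t k ^ 2 ≤ u k * (c0 * v k) := by
    intro k
    have p1 : 0 < 1 - q ^ (n + 1 + k) := by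
      have := hqm (n + k); rwa [show n + k + 1 = n + 1 + k from by ring] at this
    rw [hvt k, htu k]
    have := mul_le_mul_of_nonneg_left (hratio k)
      (mul_nonneg (hupos k).le (mul_nonneg (hupos k).le (div_pos hz0 p1).le))
    nlinarith [this]
  have h2s : t 1 ^ 2 < u 1 * (c0 * v 1) := by
    rw [hvt 1, htu 1]
    have hα : 0 < z / (1 - q ^ (n + 1 + 1)) := div_pos hz0 (hqm (n + 1))
    have := mul_lt_mul_of_pos_left hratiostrict
      (mul_pos (hupos 1) (mul_pos (hupos 1) hα))
    nlinarith [this]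
  -- sqrt pointwise bound
  have hpw : ∀ k, t k ≤ Real.sqrt (u k) * Real.sqrt (c0 * v k) := by
    intro k
    rw [← Real.sqrt_mul (hupos k).le]
    calc t k = Real.sqrt (t k ^ 2) := by rw [Real.sqrt_sq (htpos k).le]
      _ ≤ _ := Real.sqrt_le_sqrt (h2 k)
  have hpws : t 1 < Real.sqrt (u 1) * Real.sqrt (c0 * v 1) := by
    rw [← Real.sqrt_mul (hupos 1).le]
    calc t 1 = Real.sqrt (t 1 ^ 2) := by rw [Real.sqrt_sq (htpos 1).le]
      _ < _ := Real.sqrt_lt_sqrt (by positivity) h2s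
  -- summability
  have hus : Summable u := summable_term hq0 hq1 hz0 hz1 n
  have hts : Summable t := summable_term hq0 hq1 hz0 hz1 (n + 1)
  have hvs : Summable v := summable_term hq0 hq1 hz0 hz1 (n + 2)
  have hcvs : Summable (fun k => c0 * v k) := hvs.mul_left c0
  have habs : Summable (fun k => Real.sqrt (u k) * Real.sqrt (c0 * v k)) := by
    apply Summable.of_nonneg_of_le (fun k => by positivity)
      (fun k => ?_) ((hus.add hcvs).div_const 2)
    have hx := Real.sq_sqrt (hupos k).le
    have hy := Real.sq_sqrt (mul_nonneg hc0pos.le (hvpos k).le)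
    nlinarith [sq_nonneg (Real.sqrt (u k) - Real.sqrt (c0 * v k))]
  -- strict sum comparison
  have hsum_lt : ∑' k, t k < ∑' k, Real.sqrt (u k) * Real.sqrt (c0 * v k) :=
    Summable.tsum_lt_tsum hpw hpws hts habs
  -- Cauchy-Schwarz
  have hCS : ∑' k, Real.sqrt (u k) * Real.sqrt (c0 * v k) ≤
      Real.sqrt ((∑' k, u k) * (∑' k, c0 * v k)) := by
    apply Summable.tsum_le_of_sum_le habs
    intro s
    have huv : 0 ≤ (∑' k, u k) * (∑' k, c0 * v k) :=
      mul_nonneg (tsum_nonneg fun k => (hupos k).le)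
        (tsum_nonneg fun k => mul_nonneg hc0pos.le (hvpos k).le)
    rw [Real.le_sqrt (Finset.sum_nonneg (fun k _ => by positivity)) huv]
    calc (∑ k ∈ s, Real.sqrt (u k) * Real.sqrt (c0 * v k)) ^ 2
        ≤ (∑ k ∈ s, Real.sqrt (u k) ^ 2) * (∑ k ∈ s, Real.sqrt (c0 * v k) ^ 2) :=
          sum_mul_sq_le_sq_mul_sq s _ _
      _ = (∑ k ∈ s, u k) * (∑ k ∈ s, c0 * v k) := by
          congr 1 <;> apply Finset.sum_congr rfl <;> intro k _
          · exact Real.sq_sqrt (hupos k).le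
          · exact Real.sq_sqrt (mul_nonneg hc0pos.le (hvpos k).le)
      _ ≤ (∑' k, u k) * (∑' k, c0 * v k) := by
          apply mul_le_mul (Summable.sum_le_tsum s (fun k _ => (hupos k).le) hus)
            (Summable.sum_le_tsum s (fun k _ => mul_nonneg hc0pos.le (hvpos k).le) hcvs)
            (Finset.sum_nonneg (fun k _ => mul_nonneg hc0pos.le (hvpos k).le))
            (tsum_nonneg (fun k => (hupos k).le))
  -- assemble
  have hT : qexpTail q z (n + 1) = ∑' k, t k := rfl
  have hU : qexpTail q z n = ∑' k, u k := rfl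
  have hV : qexpTail q z (n + 2) = ∑' k, v k := rfl
  have htnn : 0 ≤ ∑' k, t k := tsum_nonneg (fun k => (htpos k).le)
  have hfin : (∑' k, t k) ^ 2 < (∑' k, u k) * (∑' k, c0 * v k) := by
    have hnn : 0 ≤ (∑' k, u k) * (∑' k, c0 * v k) :=
      mul_nonneg (tsum_nonneg fun k => (hupos k).le)
        (tsum_nonneg fun k => mul_nonneg hc0pos.le (hvpos k).le)
    have := pow_lt_pow_left₀ (lt_of_lt_of_le hsum_lt hCS) htnn two_ne_zero
    rwa [Real.sq_sqrt hnn] at this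
  rw [hT, hU, hV]
  rw [tsum_mul_left] at hfin
  have hkey : (∑' k, t k) ^ 2 < c0 * ((∑' k, u k) * (∑' k, v k)) := by
    rw [mul_comm (∑' k, u k) (c0 * _), mul_assoc] at hfin
    linarith [hfin]
  calc (1 - q ^ (n + 1)) / (1 - q ^ (n + 2)) * (∑' k, t k) ^ 2
      < (1 - q ^ (n + 1)) / (1 - q ^ (n + 2)) * (c0 * ((∑' k, u k) * (∑' k, v k))) := by
        apply mul_lt_mul_of_pos_left hkey (div_pos hq1' hq2')
    _ = (∑' k, u k) * (∑' k, v k) := by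
        rw [hc0]; field_simp
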